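/- Let g : ℝ → ℝ be L-Lipschitz and H a class of functions on [n]. Then the inductive Rademacher complexity satisfies E[ sup_{h∈H} (1/u) ∑_{i=1}^u σᵢ g(h(Yᵢ)) ] ≤ L · E[ sup_{h∈H} (1/u) ∑_{i=1}^u σᵢ h(Yᵢ) ], where σᵢ are i.i.d. Rademacher and Y₁,...,Y_u are i.i.d. uniform on [n], independent of σ, and g(0) = 0. -/

import Mathlib

open Finset

lemma sup'_div_const {α : Type*} (s : Finset α) (hs : s.Nonempty) (f : α → ℝ)
    (c : ℝ) (hc : 0 < c) :
    s.sup' hs (fun h => f h / c) = s.sup' hs f / c := by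
  apply le_antisymm
  · apply Finset.sup'_le
    intro h hm
    have := Finset.le_sup' f hm
    gcongr
  · obtain ⟨h0, h0m, e0⟩ := Finset.exists_mem_eq_sup' hs f
    rw [e0]
    exact Finset.le_sup' (fun h => f h / c) h0m

lemma const_mul_sup' {α : Type*} (s : Finset α) (hs : s.Nonempty) (f : α → ℝ)
    (c : ℝ) (hc : 0 ≤ c) :
    s.sup' hs (fun h => c * f h) = c * s.sup' hs f := by
  apply le_antisymm
  · apply Finset.sup'_le
    intro h hm
    exact mul_le_mul_of_nonneg_left (Finset.le_sup' f hm) hc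
  · obtain ⟨h0, h0m, e0⟩ := Finset.exists_mem_eq_sup' hs f
    rw [e0]
    exact Finset.le_sup' (fun h => c * f h) h0m

lemma contraction_step {α : Type*} (s : Finset α) (hs : s.Nonempty)
    (L : ℝ) (g : ℝ → ℝ) (hg : ∀ x y, |g x - g y| ≤ L * |x - y|)
    (a b : α → ℝ) :
    s.sup' hs (fun h => a h + g (b h)) + s.sup' hs (fun h => a h - g (b h))
      ≤ s.sup' hs (fun h => a h + L * b h) + s.sup' hs (fun h => a h - L * b h) := by
  obtain ⟨h1, h1m, e1⟩ := Finset.exists_mem_eq_sup' hs (fun h => a h + g (b h))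
  obtain ⟨h2, h2m, e2⟩ := Finset.exists_mem_eq_sup' hs (fun h => a h - g (b h))
  rw [e1, e2]
  have key : g (b h1) - g (b h2) ≤ L * |b h1 - b h2| :=
    (le_abs_self _).trans (hg _ _)
  rcases le_total (b h2) (b h1) with hbb | hbb
  · have hk : g (b h1) - g (b h2) ≤ L * b h1 - L * b h2 := by
      rw [abs_of_nonneg (by linarith)] at key; linarith [key, mul_sub L (b h1) (b h2)]
    have l1 : a h1 + L * b h1 ≤ s.sup' hs (fun h => a h + L * b h) :=
      Finset.le_sup' (fun h => a h + L * b h) h1m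
    have l2 : a h2 - L * b h2 ≤ s.sup' hs (fun h => a h - L * b h) :=
      Finset.le_sup' (fun h => a h - L * b h) h2m
    linarith
  · have hk : g (b h1) - g (b h2) ≤ L * b h2 - L * b h1 := by
      rw [abs_of_nonpos (by linarith), neg_sub] at key
      linarith [key, mul_sub L (b h2) (b h1)]
    have l1 : a h1 - L * b h1 ≤ s.sup' hs (fun h => a h - L * b h) :=
      Finset.le_sup' (fun h => a h - L * b h) h1m
    have l2 : a h2 + L * b h2 ≤ s.sup' hs (fun h => a h + L * b h) :=
      Finset.le_sup' (fun h => a h + L * b h) h2m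
    linarith

lemma contraction_main {α : Type*} (s : Finset α) (hs : s.Nonempty)
    (L : ℝ) (g : ℝ → ℝ) (hg : ∀ x y, |g x - g y| ≤ L * |x - y|) :
    ∀ (u : ℕ) (a : α → ℝ) (f : α → Fin u → ℝ),
    ∑ σ : Fin u → Bool,
        s.sup' hs (fun h => a h + ∑ i, (if σ i then (1:ℝ) else -1) * g (f h i))
    ≤ ∑ σ : Fin u → Bool,
        s.sup' hs (fun h => a h + ∑ i, (if σ i then (1:ℝ) else -1) * (L * f h i)) := by
  intro u
  induction u with
  | zero => intro a f; simp
  | succ u ih =>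
    intro a f
    -- reindex σ : Fin (u+1) → Bool as (b, τ)
    have reindex : ∀ (F : ℝ → ℝ),
        (∑ σ : Fin (u+1) → Bool,
          s.sup' hs (fun h => a h + ∑ i, (if σ i then (1:ℝ) else -1) * F (f h i)))
        = ∑ τ : Fin u → Bool,
            (s.sup' hs (fun h =>
                (a h + ∑ i, (if τ i then (1:ℝ) else -1) * F (f h i.succ)) + F (f h 0))
            + s.sup' hs (fun h =>
                (a h + ∑ i, (if τ i then (1:ℝ) else -1) * F (f h i.succ)) - F (f h 0))) := by
      intro F
      rw [← Equiv.sum_comp (Fin.consEquiv (fun _ : Fin (u+1) => Bool))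
        (fun σ : Fin (u+1) → Bool =>
          s.sup' hs (fun h => a h + ∑ i, (if σ i then (1:ℝ) else -1) * F (f h i)))]
      rw [Fintype.sum_prod_type, Fintype.sum_bool, ← Finset.sum_add_distrib]
      apply Finset.sum_congr rfl
      intro τ _
      congr 1
      · apply Finset.sup'_congr _ rfl
        intro h _
        simp [Fin.sum_univ_succ, Fin.consEquiv]
        ring
      · apply Finset.sup'_congr _ rfl
        intro h _
        simp [Fin.sum_univ_succ, Fin.consEquiv]
        ring
    rw [reindex (fun x => g x), reindex (fun x => L * x)]
    calc
      ∑ τ : Fin u → Bool,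
          (s.sup' hs (fun h =>
              (a h + ∑ i, (if τ i then (1:ℝ) else -1) * g (f h i.succ)) + g (f h 0))
          + s.sup' hs (fun h =>
              (a h + ∑ i, (if τ i then (1:ℝ) else -1) * g (f h i.succ)) - g (f h 0)))
        ≤ ∑ τ : Fin u → Bool,
          (s.sup' hs (fun h =>
              (a h + ∑ i, (if τ i then (1:ℝ) else -1) * g (f h i.succ)) + L * (f h 0))
          + s.sup' hs (fun h =>
              (a h + ∑ i, (if τ i then (1:ℝ) else -1) * g (f h i.succ)) - L * (f h 0))) := by
          apply Finset.sum_le_sum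
          intro τ _
          exact contraction_step s hs L g hg
            (fun h => a h + ∑ i, (if τ i then (1:ℝ) else -1) * g (f h i.succ))
            (fun h => f h 0)
      _ ≤ ∑ τ : Fin u → Bool,
          (s.sup' hs (fun h =>
              (a h + ∑ i, (if τ i then (1:ℝ) else -1) * (L * f h i.succ)) + L * (f h 0))
          + s.sup' hs (fun h =>
              (a h + ∑ i, (if τ i then (1:ℝ) else -1) * (L * f h i.succ)) - L * (f h 0))) := by
          rw [Finset.sum_add_distrib, Finset.sum_add_distrib]
          apply add_le_add
          · have := ih (fun h => a h + L * f h 0) (fun h i => f h i.succ)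
            calc ∑ τ : Fin u → Bool,
                  s.sup' hs (fun h =>
                    (a h + ∑ i, (if τ i then (1:ℝ) else -1) * g (f h i.succ)) + L * (f h 0))
                = ∑ τ : Fin u → Bool,
                  s.sup' hs (fun h =>
                    (a h + L * f h 0) + ∑ i, (if τ i then (1:ℝ) else -1) * g (f h i.succ)) := by
                  apply Finset.sum_congr rfl
                  intro τ _
                  apply Finset.sup'_congr _ rfl
                  intro h _
                  ring
              _ ≤ ∑ τ : Fin u → Bool,
                  s.sup' hs (fun h =>
                    (a h + L * f h 0) + ∑ i, (if τ i then (1:ℝ) else -1) * (L * f h i.succ)) :=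
                  this
              _ = _ := by
                  apply Finset.sum_congr rfl
                  intro τ _
                  apply Finset.sup'_congr _ rfl
                  intro h _
                  ring
          · have := ih (fun h => a h - L * f h 0) (fun h i => f h i.succ)
            calc ∑ τ : Fin u → Bool,
                  s.sup' hs (fun h =>
                    (a h + ∑ i, (if τ i then (1:ℝ) else -1) * g (f h i.succ)) - L * (f h 0))
                = ∑ τ : Fin u → Bool,
                  s.sup' hs (fun h =>
                    (a h - L * f h 0) + ∑ i, (if τ i then (1:ℝ) else -1) * g (f h i.succ)) := by
                  apply Finset.sum_congr rfl
                  intro τ _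
                  apply Finset.sup'_congr _ rfl
                  intro h _
                  ring
              _ ≤ ∑ τ : Fin u → Bool,
                  s.sup' hs (fun h =>
                    (a h - L * f h 0) + ∑ i, (if τ i then (1:ℝ) else -1) * (L * f h i.succ)) :=
                  this
              _ = _ := by
                  apply Finset.sum_congr rfl
                  intro τ _
                  apply Finset.sup'_congr _ rfl
                  intro h _
                  ring

/-- Ledoux–Talagrand contraction for Rademacher averages: if g is L-Lipschitz with
g(0) = 0, then the Rademacher complexity of g ∘ H is at most L times that of H. -/
theorem rademacher_contraction (n u : ℕ) (hn : 0 < n) (hu : 0 < u)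
    (L : ℝ) (hL : 0 ≤ L) (g : ℝ → ℝ)
    (hg : ∀ x y, |g x - g y| ≤ L * |x - y|) (hg0 : g 0 = 0)
    (H : Finset (Fin n → ℝ)) (hH : H.Nonempty) :
    (∑ Y : Fin u → Fin n, ∑ σ : Fin u → Bool,
        H.sup' hH (fun h => (∑ i, (if σ i then (1 : ℝ) else -1) * g (h (Y i))) / (u : ℝ)))
      / ((n : ℝ) ^ u * 2 ^ u)
    ≤ L * ((∑ Y : Fin u → Fin n, ∑ σ : Fin u → Bool,
          H.sup' hH (fun h => (∑ i, (if σ i then (1 : ℝ) else -1) * h (Y i)) / (u : ℝ)))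
        / ((n : ℝ) ^ u * 2 ^ u)) := by
  have hu' : (0:ℝ) < (u:ℝ) := by exact_mod_cast hu
  have hD : (0:ℝ) < (n : ℝ) ^ u * 2 ^ u := by positivity
  have main : ∀ Y : Fin u → Fin n,
      (∑ σ : Fin u → Bool,
        H.sup' hH (fun h => ∑ i, (if σ i then (1:ℝ) else -1) * g (h (Y i))))
      ≤ L * (∑ σ : Fin u → Bool,
        H.sup' hH (fun h => ∑ i, (if σ i then (1:ℝ) else -1) * h (Y i))) := by
    intro Y
    have h1 := contraction_main H hH L g hg u (fun _ => 0) (fun h i => h (Y i))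
    simp only [zero_add] at h1
    calc (∑ σ : Fin u → Bool,
          H.sup' hH (fun h => ∑ i, (if σ i then (1:ℝ) else -1) * g (h (Y i))))
        ≤ ∑ σ : Fin u → Bool,
          H.sup' hH (fun h => ∑ i, (if σ i then (1:ℝ) else -1) * (L * h (Y i))) := h1
      _ = ∑ σ : Fin u → Bool,
          H.sup' hH (fun h => L * ∑ i, (if σ i then (1:ℝ) else -1) * h (Y i)) := by
          apply Finset.sum_congr rfl
          intro σ _
          apply Finset.sup'_congr _ rfl
          intro h _
          rw [Finset.mul_sum]
          apply Finset.sum_congr rfl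
          intro i _
          ring
      _ = ∑ σ : Fin u → Bool,
          L * H.sup' hH (fun h => ∑ i, (if σ i then (1:ℝ) else -1) * h (Y i)) := by
          apply Finset.sum_congr rfl
          intro σ _
          exact const_mul_sup' H hH _ L hL
      _ = L * ∑ σ : Fin u → Bool,
          H.sup' hH (fun h => ∑ i, (if σ i then (1:ℝ) else -1) * h (Y i)) := by
          rw [Finset.mul_sum]
  have total : (∑ Y : Fin u → Fin n, ∑ σ : Fin u → Bool,
        H.sup' hH (fun h => (∑ i, (if σ i then (1:ℝ) else -1) * g (h (Y i))) / (u : ℝ)))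
      ≤ L * (∑ Y : Fin u → Fin n, ∑ σ : Fin u → Bool,
        H.sup' hH (fun h => (∑ i, (if σ i then (1:ℝ) else -1) * h (Y i)) / (u : ℝ))) := by
    have e1 : ∀ (Y : Fin u → Fin n) (σ : Fin u → Bool),
        H.sup' hH (fun h => (∑ i, (if σ i then (1:ℝ) else -1) * g (h (Y i))) / (u : ℝ))
        = H.sup' hH (fun h => ∑ i, (if σ i then (1:ℝ) else -1) * g (h (Y i))) / (u : ℝ) :=
      fun Y σ => sup'_div_const H hH _ _ hu'
    have e2 : ∀ (Y : Fin u → Fin n) (σ : Fin u → Bool),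
        H.sup' hH (fun h => (∑ i, (if σ i then (1:ℝ) else -1) * h (Y i)) / (u : ℝ))
        = H.sup' hH (fun h => ∑ i, (if σ i then (1:ℝ) else -1) * h (Y i)) / (u : ℝ) :=
      fun Y σ => sup'_div_const H hH _ _ hu'
    simp only [e1, e2, ← Finset.sum_div, ← Finset.mul_sum]
    rw [← mul_div_assoc]
    have key : (0:ℝ) < (u:ℝ) := hu'
    apply div_le_div_of_nonneg_right ?_ hu'.le
    calc ∑ Y : Fin u → Fin n, ∑ σ : Fin u → Bool,
          H.sup' hH (fun h => ∑ i, (if σ i then (1:ℝ) else -1) * g (h (Y i)))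
        ≤ ∑ Y : Fin u → Fin n, L * ∑ σ : Fin u → Bool,
          H.sup' hH (fun h => ∑ i, (if σ i then (1:ℝ) else -1) * h (Y i)) :=
        Finset.sum_le_sum (fun Y _ => main Y)
      _ = L * ∑ Y : Fin u → Fin n, ∑ σ : Fin u → Bool,
          H.sup' hH (fun h => ∑ i, (if σ i then (1:ℝ) else -1) * h (Y i)) := by
          rw [Finset.mul_sum]
  rw [← mul_div_assoc]
  exact div_le_div_of_nonneg_right total hD.le
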